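/- Let λ > 2 and set a = (λ − √(λ² − 4))/2 and b = (λ + √(λ² − 4))/2, so that a·b = 1, a + b = λ, and (b − η)(η − a) = −η² + λη − 1. Then ∫_a^b ( −2η² + 2λη − λ − 1 ) / ( η·√((b − η)(η − a)) ) dη = −π. -/

import Mathlib

open Real intervalIntegral MeasureTheory

set_option maxHeartbeats 1000000

lemma schwarzian_aux (l a b : ℝ) (hl : 2 < l) (ha0 : 0 < a) (hab : a < b)
    (hmul : a * b = 1) (hsum : a + b = l) :
    (∫ η in a..b,
        (-2 * η ^ 2 + 2 * l * η - l - 1) / (η * Real.sqrt ((b - η) * (η - a))))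
      = -π := by
  have hb0 : 0 < b := lt_trans ha0 hab
  have hbl : b < l := by nlinarith
  have hd0 : 0 < b - a := by linarith
  have hdsq : (b - a) ^ 2 = l ^ 2 - 4 := by linear_combination (a + b + l) * hsum - 4 * hmul
  set F : ℝ → ℝ := fun η => 2 * Real.sqrt ((b - η) * (η - a))
      + l * Real.arcsin ((2 * η - l) / (b - a))
      - (l + 1) * Real.arcsin ((l * η - 2) / (η * (b - a))) with hF
  set f : ℝ → ℝ := fun η =>
      (-2 * η ^ 2 + 2 * l * η - l - 1) / (η * Real.sqrt ((b - η) * (η - a))) with hf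
  -- continuity of F on Icc a b
  have hcont : ContinuousOn F (Set.Icc a b) := by
    apply ContinuousOn.sub
    apply ContinuousOn.add
    · exact (continuous_const.mul (((continuous_const.sub continuous_id).mul
        (continuous_id.sub continuous_const)).sqrt)).continuousOn
    · exact (continuous_const.mul (Real.continuous_arcsin.comp
        (((continuous_const.mul continuous_id).sub continuous_const).div_const _))).continuousOn
    · refine continuousOn_const.mul (Real.continuous_arcsin.comp_continuousOn ?_)
      refine ContinuousOn.div ?_ ?_ ?_
      · exact ((continuous_const.mul continuous_id).sub continuous_const).continuousOn
      · exact (continuous_id.mul continuous_const).continuousOn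
      · intro x hx
        have : 0 < x := lt_of_lt_of_le ha0 hx.1
        positivity
  -- derivative on Ioo a b
  have hderiv : ∀ η ∈ Set.Ioo a b, HasDerivAt F (f η) η := by
    intro η hη
    obtain ⟨hηa, hηb⟩ := hη
    have hη0 : 0 < η := lt_trans ha0 hηa
    have hQ : 0 < (b - η) * (η - a) := mul_pos (by linarith) (by linarith)
    have hsq : 0 < Real.sqrt ((b - η) * (η - a)) := Real.sqrt_pos.2 hQ
    have hkey1 : (b - a) ^ 2 - (2 * η - l) ^ 2 = 4 * ((b - η) * (η - a)) := by
      nlinarith [hdsq, hsum, hmul]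
    have hkey2 : (η * (b - a)) ^ 2 - (l * η - 2) ^ 2 = 4 * ((b - η) * (η - a)) := by
      nlinarith [hdsq, hsum, hmul]
    -- bounds on arcsin args
    have hu2 : ((2 * η - l) / (b - a)) ^ 2 < 1 := by
      rw [div_pow, div_lt_one (by positivity)]
      nlinarith
    have hv2 : ((l * η - 2) / (η * (b - a))) ^ 2 < 1 := by
      rw [div_pow, div_lt_one (by positivity)]
      nlinarith
    have hu1 : (2 * η - l) / (b - a) ≠ -1 := by
      intro h; rw [h] at hu2; norm_num at hu2
    have hu1' : (2 * η - l) / (b - a) ≠ 1 := by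
      intro h; rw [h] at hu2; norm_num at hu2
    have hv1 : (l * η - 2) / (η * (b - a)) ≠ -1 := by
      intro h; rw [h] at hv2; norm_num at hv2
    have hv1' : (l * η - 2) / (η * (b - a)) ≠ 1 := by
      intro h; rw [h] at hv2; norm_num at hv2
    -- sqrt identities
    have hsu : Real.sqrt (1 - ((2 * η - l) / (b - a)) ^ 2)
        = 2 * Real.sqrt ((b - η) * (η - a)) / (b - a) := by
      have e : 1 - ((2 * η - l) / (b - a)) ^ 2
          = (2 * Real.sqrt ((b - η) * (η - a)) / (b - a)) ^ 2 := by
        have h2 : (2 * Real.sqrt ((b - η) * (η - a)) / (b - a)) ^ 2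
            = 4 * ((b - η) * (η - a)) / (b - a) ^ 2 := by
          rw [div_pow, mul_pow, Real.sq_sqrt hQ.le]
          norm_num
        rw [h2]
        field_simp
        linarith [hkey1]
      rw [e, Real.sqrt_sq (by positivity)]
    have hsv : Real.sqrt (1 - ((l * η - 2) / (η * (b - a))) ^ 2)
        = 2 * Real.sqrt ((b - η) * (η - a)) / (η * (b - a)) := by
      have e : 1 - ((l * η - 2) / (η * (b - a))) ^ 2
          = (2 * Real.sqrt ((b - η) * (η - a)) / (η * (b - a))) ^ 2 := by
        have h2 : (2 * Real.sqrt ((b - η) * (η - a)) / (η * (b - a))) ^ 2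
            = 4 * ((b - η) * (η - a)) / (η * (b - a)) ^ 2 := by
          rw [div_pow, mul_pow, Real.sq_sqrt hQ.le]
          norm_num
        rw [h2]
        field_simp
        linarith [hkey2]
      rw [e, Real.sqrt_sq (by positivity)]
    -- pieces
    have h1 : HasDerivAt (fun x : ℝ => (b - x) * (x - a)) (l - 2 * η) η := by
      have : HasDerivAt (fun x : ℝ => (b - x) * (x - a)) (-1 * (η - a) + (b - η) * 1) η :=
        ((hasDerivAt_id η).const_sub b).mul ((hasDerivAt_id η).sub_const a)
      convert this using 1
      simp only [id_eq, mul_one]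
      linarith
    have h2 : HasDerivAt (fun x : ℝ => Real.sqrt ((b - x) * (x - a)))
        (1 / (2 * Real.sqrt ((b - η) * (η - a))) * (l - 2 * η)) η :=
      (Real.hasDerivAt_sqrt hQ.ne').comp η h1
    have h3i : HasDerivAt (fun x : ℝ => (2 * x - l) / (b - a)) (2 * 1 / (b - a)) η :=
      (((hasDerivAt_id η).const_mul 2).sub_const l).div_const (b - a)
    have h3 : HasDerivAt (fun x : ℝ => Real.arcsin ((2 * x - l) / (b - a)))
        (1 / Real.sqrt (1 - ((2 * η - l) / (b - a)) ^ 2) * (2 * 1 / (b - a))) η :=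
      ((Real.hasDerivAt_arcsin hu1 hu1').comp η h3i :)
    have h4num : HasDerivAt (fun x : ℝ => l * x - 2) (l * 1) η :=
      ((hasDerivAt_id η).const_mul l).sub_const 2
    have h4den : HasDerivAt (fun x : ℝ => x * (b - a)) (1 * (b - a)) η :=
      (hasDerivAt_id η).mul_const (b - a)
    have h4i : HasDerivAt (fun x : ℝ => (l * x - 2) / (x * (b - a)))
        ((l * 1 * (η * (b - a)) - (l * η - 2) * (1 * (b - a))) / (η * (b - a)) ^ 2) η :=
      h4num.div h4den (by positivity)
    have h4 : HasDerivAt (fun x : ℝ => Real.arcsin ((l * x - 2) / (x * (b - a))))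
        (1 / Real.sqrt (1 - ((l * η - 2) / (η * (b - a))) ^ 2)
          * ((l * 1 * (η * (b - a)) - (l * η - 2) * (1 * (b - a))) / (η * (b - a)) ^ 2)) η :=
      ((Real.hasDerivAt_arcsin hv1 hv1').comp η h4i :)
    have hFd : HasDerivAt F
        (2 * (1 / (2 * Real.sqrt ((b - η) * (η - a))) * (l - 2 * η)) +
          l * (1 / Real.sqrt (1 - ((2 * η - l) / (b - a)) ^ 2) * (2 * 1 / (b - a))) -
          (l + 1) * (1 / Real.sqrt (1 - ((l * η - 2) / (η * (b - a))) ^ 2) *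
            ((l * 1 * (η * (b - a)) - (l * η - 2) * (1 * (b - a))) / (η * (b - a)) ^ 2))) η :=
      ((h2.const_mul 2).add (h3.const_mul l)).sub (h4.const_mul (l + 1))
    convert hFd using 1
    rw [hsu, hsv, hf]
    have hsqne : Real.sqrt ((b - η) * (η - a)) ≠ 0 := hsq.ne'
    field_simp
    ring
  -- interval integrability of f
  have hint : IntervalIntegrable f volume a b := by
    set m : ℝ := (a + b) / 2 with hm
    have ham : a < m := by simp only [hm]; linarith
    have hmb : m < b := by simp only [hm]; linarith
    have hM : ∀ x ∈ Set.Icc a b, |(-2 * x ^ 2 + 2 * l * x - l - 1)| ≤ 4 * l ^ 2 + l + 1 := by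
      intro x hx
      have h1 : 0 < x := lt_of_lt_of_le ha0 hx.1
      have h2 : x ≤ b := hx.2
      rw [abs_le]
      constructor <;> nlinarith [hbl]
    have hmeas : ∀ c d : ℝ, AEStronglyMeasurable f (volume.restrict (Set.uIoc c d)) := by
      intro c d
      apply Measurable.aestronglyMeasurable
      apply Measurable.div
      · fun_prop
      · fun_prop
    -- left piece
    have hleft : IntervalIntegrable f volume a m := by
      have hg : IntervalIntegrable
          (fun x => (4 * l ^ 2 + l + 1) / (a * Real.sqrt (b - m)) * (x - a) ^ (-(1/2) : ℝ))
          volume a m := by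
        have h0 := (intervalIntegrable_rpow' (a := 0) (b := m - a)
          (r := -(1/2)) (by norm_num)).comp_sub_right a
        simpa using h0.const_mul ((4 * l ^ 2 + l + 1) / (a * Real.sqrt (b - m)))
      refine hg.mono_fun' (hmeas a m) ?_
      rw [Set.uIoc_of_le ham.le]
      refine (ae_restrict_iff' measurableSet_Ioc).2 (Filter.Eventually.of_forall ?_)
      intro x hx
      obtain ⟨hxa, hxm⟩ := hx
      have hx0 : 0 < x := lt_trans ha0 hxa
      have hxb : x < b := lt_of_le_of_lt hxm hmb
      have hQ : 0 < (b - x) * (x - a) := mul_pos (by linarith) (by linarith)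
      have hxa0 : 0 < x - a := by linarith
      have hsplit : Real.sqrt ((b - x) * (x - a))
          = Real.sqrt (b - x) * Real.sqrt (x - a) := Real.sqrt_mul (by linarith) _
      have hrpow : (x - a) ^ (-(1/2) : ℝ) = 1 / Real.sqrt (x - a) := by
        rw [Real.rpow_neg hxa0.le, Real.sqrt_eq_rpow]
        norm_num
      have hbm : Real.sqrt (b - m) ≤ Real.sqrt (b - x) := Real.sqrt_le_sqrt (by linarith)
      have hbm0 : 0 < Real.sqrt (b - m) := Real.sqrt_pos.2 (by linarith)
      have hxs0 : 0 < Real.sqrt (x - a) := Real.sqrt_pos.2 hxa0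
      simp only [hf, norm_div, Real.norm_eq_abs]
      rw [hrpow]
      have hden : |x * Real.sqrt ((b - x) * (x - a))|
          = x * (Real.sqrt (b - x) * Real.sqrt (x - a)) := by
        rw [abs_of_pos]
        · rw [hsplit]
        · positivity
      rw [hden]
      have hnum := hM x ⟨hxa.le, by linarith⟩
      have e : (4 * l ^ 2 + l + 1) / (a * Real.sqrt (b - m)) * (1 / Real.sqrt (x - a))
          = (4 * l ^ 2 + l + 1) / (a * Real.sqrt (b - m) * Real.sqrt (x - a)) := by
        rw [div_mul_div_comm, mul_one]
      rw [e]
      refine div_le_div₀ (by positivity) hnum (by positivity) ?_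
      have h1 : a * Real.sqrt (b - m) ≤ x * Real.sqrt (b - x) :=
        mul_le_mul hxa.le hbm hbm0.le hx0.le
      nlinarith [mul_le_mul_of_nonneg_right h1 hxs0.le]
    -- right piece
    have hright : IntervalIntegrable f volume m b := by
      have hg : IntervalIntegrable
          (fun x => (4 * l ^ 2 + l + 1) / (a * Real.sqrt (m - a)) * (b - x) ^ (-(1/2) : ℝ))
          volume m b := by
        have h0 := (intervalIntegrable_rpow' (a := 0) (b := b - m)
          (r := -(1/2)) (by norm_num)).comp_sub_left b
        have h1 : IntervalIntegrable (fun x => (b - x) ^ (-(1/2) : ℝ)) volume m b := by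
          have := h0.symm
          simpa using this
        exact h1.const_mul _
      refine hg.mono_fun' (hmeas m b) ?_
      rw [Set.uIoc_of_le hmb.le]
      refine (ae_restrict_iff' measurableSet_Ioc).2 (Filter.Eventually.of_forall ?_)
      intro x hx
      obtain ⟨hxm, hxb⟩ := hx
      have hxa : a < x := lt_trans ham hxm
      have hx0 : 0 < x := lt_trans ha0 hxa
      rcases eq_or_lt_of_le hxb with heq | hxb'
      · -- x = b : both sides vanish
        subst heq
        simp [hf, sub_self, Real.zero_rpow (show (-(1/2) : ℝ) ≠ 0 by norm_num)]
      · have hQ : 0 < (b - x) * (x - a) := mul_pos (by linarith) (by linarith)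
        have hxb0 : 0 < b - x := by linarith
        have hsplit : Real.sqrt ((b - x) * (x - a))
            = Real.sqrt (b - x) * Real.sqrt (x - a) := Real.sqrt_mul (by linarith) _
        have hrpow : (b - x) ^ (-(1/2) : ℝ) = 1 / Real.sqrt (b - x) := by
          rw [Real.rpow_neg hxb0.le, Real.sqrt_eq_rpow]
          norm_num
        have hma : Real.sqrt (m - a) ≤ Real.sqrt (x - a) := Real.sqrt_le_sqrt (by linarith)
        have hma0 : 0 < Real.sqrt (m - a) := Real.sqrt_pos.2 (by linarith)
        have hxs0 : 0 < Real.sqrt (b - x) := Real.sqrt_pos.2 hxb0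
        have hxs0' : 0 < Real.sqrt (x - a) := Real.sqrt_pos.2 (by linarith)
        simp only [hf, norm_div, Real.norm_eq_abs]
        rw [hrpow]
        have hden : |x * Real.sqrt ((b - x) * (x - a))|
            = x * (Real.sqrt (b - x) * Real.sqrt (x - a)) := by
          rw [abs_of_pos]
          · rw [hsplit]
          · positivity
        rw [hden]
        have hnum := hM x ⟨hxa.le, hxb⟩
        have e : (4 * l ^ 2 + l + 1) / (a * Real.sqrt (m - a)) * (1 / Real.sqrt (b - x))
            = (4 * l ^ 2 + l + 1) / (a * Real.sqrt (m - a) * Real.sqrt (b - x)) := by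
          rw [div_mul_div_comm, mul_one]
        rw [e]
        refine div_le_div₀ (by positivity) hnum (by positivity) ?_
        have h1 : a * Real.sqrt (m - a) ≤ x * Real.sqrt (x - a) :=
          mul_le_mul hxa.le hma hma0.le hx0.le
        nlinarith [mul_le_mul_of_nonneg_right h1 hxs0.le]
    exact hleft.trans hright
  -- apply FTC
  have := intervalIntegral.integral_eq_sub_of_hasDerivAt_of_le hab.le hcont hderiv hint
  rw [hf] at this
  rw [this]
  -- endpoint values
  have hFa : F a = π / 2 := by
    have e1 : (2 * a - l) / (b - a) = -1 := by
      rw [div_eq_iff hd0.ne']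
      linarith
    have e2 : (l * a - 2) / (a * (b - a)) = -1 := by
      rw [div_eq_iff (by positivity)]
      linear_combination (-a) * hsum + 2 * hmul
    simp only [hF, sub_self, mul_zero, zero_mul, Real.sqrt_zero, e1, e2,
      Real.arcsin_neg_one]
    ring
  have hFb : F b = -(π / 2) := by
    have e1 : (2 * b - l) / (b - a) = 1 := by
      rw [div_eq_iff hd0.ne']
      linarith
    have e2 : (l * b - 2) / (b * (b - a)) = 1 := by
      rw [div_eq_iff (by positivity)]
      linear_combination (-b) * hsum + 2 * hmul
    simp only [hF, sub_self, mul_zero, zero_mul, Real.sqrt_zero, e1, e2,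
      Real.arcsin_one]
    ring
  rw [hFa, hFb]
  ring

/-- For `λ > 2`, with turning points `a = (λ − √(λ² − 4))/2` and
`b = (λ + √(λ² − 4))/2` (so that `a b = 1`, `a + b = λ`, and
`(b − η)(η − a) = −η² + λη − 1`), the on-shell Schwarzian integral satisfies
`∫_a^b (−2η² + 2λη − λ − 1)/(η √((b − η)(η − a))) dη = −π`. -/
theorem onshell_schwarzian_integral
    (l : ℝ) (hl : 2 < l) :
    let a := (l - Real.sqrt (l ^ 2 - 4)) / 2
    let b := (l + Real.sqrt (l ^ 2 - 4)) / 2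
    a * b = 1 ∧ a + b = l ∧
      (∀ η : ℝ, (b - η) * (η - a) = -η ^ 2 + l * η - 1) ∧
      (∫ η in a..b,
          (-2 * η ^ 2 + 2 * l * η - l - 1) / (η * Real.sqrt ((b - η) * (η - a))))
        = -π := by
  intro a b
  have hd : (0:ℝ) < l ^ 2 - 4 := by nlinarith
  have hs0 : 0 < Real.sqrt (l ^ 2 - 4) := Real.sqrt_pos.2 hd
  have hssq : Real.sqrt (l ^ 2 - 4) ^ 2 = l ^ 2 - 4 := Real.sq_sqrt hd.le
  have hsl : Real.sqrt (l ^ 2 - 4) < l := by nlinarith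
  have hadef : a = (l - Real.sqrt (l ^ 2 - 4)) / 2 := rfl
  have hbdef : b = (l + Real.sqrt (l ^ 2 - 4)) / 2 := rfl
  have ha0 : 0 < a := by rw [hadef]; linarith
  have hab : a < b := by rw [hadef, hbdef]; linarith
  have hmul : a * b = 1 := by
    rw [hadef, hbdef]
    nlinarith [hssq]
  have hsum : a + b = l := by rw [hadef, hbdef]; ring
  refine ⟨hmul, hsum, fun η => by linear_combination η * hsum - hmul, ?_⟩
  exact schwarzian_aux l a b hl ha0 hab hmul hsum
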